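/- arXiv:1707.06360 — 2 statements merged into one kernel-verified Lean document; each statement's English description precedes it below -/
import Mathlib

section
/- Let B be a V×V real symmetric matrix with eigenvalues σ_1(B) ≥ … ≥ σ_V(B) in decreasing order. Let K ≤ V and let λ_1 ≥ … ≥ λ_k > 0 > λ_{k+1} ≥ … ≥ λ_K be real numbers (k of them positive, K−k negative). Then for every orthonormal family u_1,…,u_K in ℝ^V, ∑_{j=1}^K λ_j · uⱼᵀ B uⱼ ≤ ∑_{j=1}^k λ_j σ_j(B) + ∑_{j=k+1}^K λ_j σ_{V−K+j}(B), and equality is attained by choosing u_1,…,u_k to be orthonormal eigenvectors of B for the k largest eigenvalues σ_1(B),…,σ_k(B) and u_{k+1},…,u_K to be orthonormal eigenvectors for the K−k smallest eigenvalues σ_{V−K+k+1}(B),…,σ_V(B). -/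
open Matrix BigOperators

/-- The index map sending `j < k` to `j` (top eigenvalues) and `j ≥ k` to
`V - K + j` (bottom eigenvalues). -/
def mgrafIdx (V K k : ℕ) (hKV : K ≤ V) (j : Fin K) : Fin V :=
  if (j : ℕ) < k then ⟨j, lt_of_lt_of_le j.isLt hKV⟩
  else ⟨V - K + j, by have := j.isLt; omega⟩

/-! ### Auxiliary lemmas -/

/-- Promote a function on `Fin n` to a function on `ℕ` (zero outside). -/
def mgrafNatify {n : ℕ} (f : Fin n → ℝ) : ℕ → ℝ := fun m => if h : m < n then f ⟨m, h⟩ else 0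

lemma mgrafNatify_coe {n : ℕ} (f : Fin n → ℝ) (i : Fin n) : mgrafNatify f ↑i = f i := by
  simp [mgrafNatify]

lemma mgraf_sum_natify {n : ℕ} (f : Fin n → ℝ) :
    ∑ i : Fin n, f i = ∑ m ∈ Finset.range n, mgrafNatify f m := by
  rw [← Fin.sum_univ_eq_sum_range (mgrafNatify f) n]
  exact Finset.sum_congr rfl fun i _ => (mgrafNatify_coe f i).symm

lemma mgraf_sum_natify_ite {n : ℕ} (f : Fin n → ℝ) (P : ℕ → Prop) [DecidablePred P] :
    ∑ i : Fin n, (if P ↑i then f i else 0)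
      = ∑ m ∈ Finset.range n, (if P m then mgrafNatify f m else 0) := by
  rw [← Fin.sum_univ_eq_sum_range (fun m => if P m then mgrafNatify f m else 0) n]
  exact Finset.sum_congr rfl fun i _ => by rw [mgrafNatify_coe]

lemma mgraf_sum_ite_lt (M n : ℕ) (hM : M ≤ n) (f : ℕ → ℝ) :
    ∑ m ∈ Finset.range n, (if m < M then f m else 0) = ∑ m ∈ Finset.range M, f m := by
  rw [← Finset.sum_subset (Finset.range_subset_range.2 hM)
      (fun x _ hx => by rw [if_neg (by simpa using hx)])]
  exact Finset.sum_congr rfl fun x hx => if_pos (Finset.mem_range.1 hx)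

lemma mgraf_reflect (M n : ℕ) (hM : M ≤ n) (f : ℕ → ℝ) :
    ∑ m ∈ Finset.range M, f (n - 1 - m)
      = ∑ m ∈ Finset.range n, (if n - M ≤ m then f m else 0) := by
  have h1 : ∑ m ∈ Finset.range M, f (n - 1 - m)
      = ∑ m ∈ Finset.range n, (if m < M then f (n - 1 - m) else 0) :=
    (mgraf_sum_ite_lt M n hM (fun m => f (n - 1 - m))).symm
  rw [h1, ← Finset.sum_range_reflect (fun m => if m < M then f (n - 1 - m) else 0) n]
  refine Finset.sum_congr rfl fun m hm => ?_
  have hm' := Finset.mem_range.1 hm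
  have hcond : (n - 1 - m < M) ↔ (n - M ≤ m) := by omega
  have harg : n - 1 - (n - 1 - m) = m := by omega
  rw [harg, if_congr hcond rfl rfl]

lemma mgraf_ones_lt (V M : ℕ) (hM : M ≤ V) :
    ∑ i : Fin V, (if (i : ℕ) < M then (1 : ℝ) else 0) = M := by
  rw [Fin.sum_univ_eq_sum_range (fun m => if m < M then (1 : ℝ) else 0) V,
    mgraf_sum_ite_lt M V hM]
  simp

lemma mgraf_ones_ge (V M : ℕ) (hM : M ≤ V) :
    ∑ i : Fin V, (if V - M ≤ (i : ℕ) then (1 : ℝ) else 0) = M := by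
  rw [Fin.sum_univ_eq_sum_range (fun m => if V - M ≤ m then (1 : ℝ) else 0) V,
    ← mgraf_reflect M V hM (fun _ => (1 : ℝ))]
  simp

/-- Abel-summation comparison: decreasing nonnegative weights preserve
domination of partial sums. -/
lemma mgraf_abel_le : ∀ (n : ℕ) (a x y : ℕ → ℝ),
    (∀ j, j < n → 0 ≤ a j) →
    (∀ i j, i ≤ j → j < n → a j ≤ a i) →
    (∀ m, m ≤ n → ∑ j ∈ Finset.range m, x j ≤ ∑ j ∈ Finset.range m, y j) →
    ∑ j ∈ Finset.range n, a j * x j ≤ ∑ j ∈ Finset.range n, a j * y j := by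
  intro n
  induction n with
  | zero => intro a x y _ _ _; simp
  | succ n ih =>
    intro a x y ha0 hmono hxy
    have key : ∀ z : ℕ → ℝ, ∑ j ∈ Finset.range (n + 1), a j * z j
        = ∑ j ∈ Finset.range n, (a j - a n) * z j
          + a n * ∑ j ∈ Finset.range (n + 1), z j := by
      intro z
      have h1 : ∑ j ∈ Finset.range (n + 1), a j * z j
          = ∑ j ∈ Finset.range (n + 1), ((a j - a n) * z j + a n * z j) :=
        Finset.sum_congr rfl fun j _ => by ring
      rw [h1, Finset.sum_add_distrib, ← Finset.mul_sum, Finset.sum_range_succ, sub_self,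
        zero_mul, add_zero]
    have h2 := ih (fun j => a j - a n) x y
      (fun j hj => sub_nonneg.2 (hmono j n (Nat.le_of_lt hj) (Nat.lt_succ_self n)))
      (fun i j hij hj => sub_le_sub_right (hmono i j hij (Nat.lt_succ_of_lt hj)) _)
      (fun m hm => hxy m (Nat.le_succ_of_le hm))
    have h3 : a n * ∑ j ∈ Finset.range (n + 1), x j
        ≤ a n * ∑ j ∈ Finset.range (n + 1), y j :=
      mul_le_mul_of_nonneg_left (hxy (n + 1) le_rfl) (ha0 n (Nat.lt_succ_self n))
    rw [key x, key y]
    exact add_le_add h2 h3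

/-- Upper rearrangement bound for substochastic weights. -/
lemma mgraf_rearr_upper (V M : ℕ) (hM : M ≤ V) (σ t : Fin V → ℝ) (hσ : Antitone σ)
    (ht0 : ∀ i, 0 ≤ t i) (ht1 : ∀ i, t i ≤ 1) (hsum : ∑ i, t i = M) :
    ∑ i : Fin V, σ i * t i ≤ ∑ i : Fin V, (if (i : ℕ) < M then σ i else 0) := by
  rcases eq_or_lt_of_le hM with h | h
  · subst h
    have h0 : ∑ i : Fin M, (1 - t i) = 0 := by
      rw [Finset.sum_sub_distrib, hsum]; simp
    have hall : ∀ i, t i = 1 := by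
      intro i
      have := (Finset.sum_eq_zero_iff_of_nonneg
        (fun j _ => by linarith [ht1 j])).1 h0 i (Finset.mem_univ i)
      linarith
    have : ∀ i : Fin M, (if (i : ℕ) < M then σ i else 0) = σ i * t i := fun i => by
      rw [if_pos i.isLt, hall i, mul_one]
    rw [Finset.sum_congr rfl fun i _ => this i]
  · set c := σ ⟨M, h⟩ with hc
    have key : ∀ i : Fin V, σ i * t i
        ≤ (if (i : ℕ) < M then σ i else 0)
          + c * (t i - (if (i : ℕ) < M then (1 : ℝ) else 0)) := by
      intro i
      by_cases hi : (i : ℕ) < M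
      · rw [if_pos hi, if_pos hi]
        have hσi : c ≤ σ i := hσ (Fin.le_def.2 (show (i : ℕ) ≤ M from Nat.le_of_lt hi))
        nlinarith [ht1 i]
      · rw [if_neg hi, if_neg hi]
        have hσi : σ i ≤ c := hσ (Fin.le_def.2 (show M ≤ (i : ℕ) by omega))
        nlinarith [ht0 i]
    calc ∑ i : Fin V, σ i * t i
        ≤ ∑ i : Fin V, ((if (i : ℕ) < M then σ i else 0)
            + c * (t i - (if (i : ℕ) < M then (1 : ℝ) else 0))) :=
          Finset.sum_le_sum fun i _ => key i
      _ = (∑ i : Fin V, (if (i : ℕ) < M then σ i else 0))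
            + c * ((∑ i : Fin V, t i) - ∑ i : Fin V, (if (i : ℕ) < M then (1 : ℝ) else 0)) := by
          rw [Finset.sum_add_distrib, ← Finset.mul_sum, Finset.sum_sub_distrib]
      _ = ∑ i : Fin V, (if (i : ℕ) < M then σ i else 0) := by
          rw [hsum, mgraf_ones_lt V M hM, sub_self, mul_zero, add_zero]

/-- Lower rearrangement bound for substochastic weights. -/
lemma mgraf_rearr_lower (V M : ℕ) (hM : M ≤ V) (σ t : Fin V → ℝ) (hσ : Antitone σ)
    (ht0 : ∀ i, 0 ≤ t i) (ht1 : ∀ i, t i ≤ 1) (hsum : ∑ i, t i = M) :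
    ∑ i : Fin V, (if V - M ≤ (i : ℕ) then σ i else 0) ≤ ∑ i : Fin V, σ i * t i := by
  rcases Nat.eq_zero_or_pos M with h | h
  · subst h
    have hall : ∀ i ∈ Finset.univ, t i = 0 :=
      (Finset.sum_eq_zero_iff_of_nonneg (fun j _ => ht0 j)).1 (by simpa using hsum)
    refine le_of_eq ?_
    calc ∑ i : Fin V, (if V - 0 ≤ (i : ℕ) then σ i else 0) = 0 :=
          Finset.sum_eq_zero fun i _ => by rw [if_neg (by omega)]
      _ = ∑ i : Fin V, σ i * t i :=
          (Finset.sum_eq_zero fun i hi => by rw [hall i hi, mul_zero]).symm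
  · have hVM : V - M < V := by omega
    set c := σ ⟨V - M, hVM⟩ with hc
    have key : ∀ i : Fin V,
        (if V - M ≤ (i : ℕ) then σ i else 0)
          + c * (t i - (if V - M ≤ (i : ℕ) then (1 : ℝ) else 0)) ≤ σ i * t i := by
      intro i
      by_cases hi : V - M ≤ (i : ℕ)
      · rw [if_pos hi, if_pos hi]
        have hσi : σ i ≤ c := hσ (Fin.le_def.2 (show V - M ≤ (i : ℕ) from hi))
        nlinarith [ht1 i]
      · rw [if_neg hi, if_neg hi]
        have hσi : c ≤ σ i := hσ (Fin.le_def.2 (show (i : ℕ) ≤ V - M by omega))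
        nlinarith [ht0 i]
    calc ∑ i : Fin V, (if V - M ≤ (i : ℕ) then σ i else 0)
        = (∑ i : Fin V, (if V - M ≤ (i : ℕ) then σ i else 0))
            + c * ((∑ i : Fin V, t i)
              - ∑ i : Fin V, (if V - M ≤ (i : ℕ) then (1 : ℝ) else 0)) := by
          rw [hsum, mgraf_ones_ge V M hM, sub_self, mul_zero, add_zero]
      _ = ∑ i : Fin V, ((if V - M ≤ (i : ℕ) then σ i else 0)
            + c * (t i - (if V - M ≤ (i : ℕ) then (1 : ℝ) else 0))) := by
          rw [Finset.sum_add_distrib, ← Finset.mul_sum, Finset.sum_sub_distrib]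
      _ ≤ ∑ i : Fin V, σ i * t i := Finset.sum_le_sum fun i _ => key i

/-- Bessel's inequality for an orthonormal family. -/
lemma mgraf_bessel {K V : ℕ} (u : Fin K → Fin V → ℝ)
    (hu : ∀ i j : Fin K, u i ⬝ᵥ u j = if i = j then 1 else 0)
    (S : Finset (Fin K)) (v : Fin V → ℝ) :
    ∑ j ∈ S, (u j ⬝ᵥ v) ^ 2 ≤ v ⬝ᵥ v := by
  set w : Fin V → ℝ := ∑ j ∈ S, (u j ⬝ᵥ v) • u j with hw
  have hsum_dot' : ∀ (c : Fin K → ℝ) (z : Fin V → ℝ),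
      (∑ j ∈ S, c j • u j) ⬝ᵥ z = ∑ j ∈ S, c j * (u j ⬝ᵥ z) := by
    intro c z
    simp only [dotProduct, Finset.sum_apply, Pi.smul_apply, smul_eq_mul,
      Finset.sum_mul]
    rw [Finset.sum_comm]
    exact Finset.sum_congr rfl fun j _ => by
      rw [Finset.mul_sum]
      exact Finset.sum_congr rfl fun i _ => by ring
  have hsum_dot : ∀ z : Fin V → ℝ,
      w ⬝ᵥ z = ∑ j ∈ S, (u j ⬝ᵥ v) * (u j ⬝ᵥ z) := fun z => by
    rw [hw]; exact hsum_dot' (fun j => u j ⬝ᵥ v) z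
  have hjw : ∀ j ∈ S, u j ⬝ᵥ w = u j ⬝ᵥ v := by
    intro j hj
    rw [dotProduct_comm, hsum_dot (u j)]
    have h1 : ∀ j' ∈ S, (u j' ⬝ᵥ v) * (u j' ⬝ᵥ u j)
        = if j' = j then (u j' ⬝ᵥ v) else 0 := fun j' _ => by
      rw [hu j' j]
      by_cases h : j' = j <;> simp [h]
    rw [Finset.sum_congr rfl h1, Finset.sum_ite_eq' S j (fun j' => u j' ⬝ᵥ v), if_pos hj]
  have hww : w ⬝ᵥ w = ∑ j ∈ S, (u j ⬝ᵥ v) ^ 2 := by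
    rw [hsum_dot w]
    exact Finset.sum_congr rfl fun j hj => by rw [hjw j hj]; ring
  have hwv : w ⬝ᵥ v = ∑ j ∈ S, (u j ⬝ᵥ v) ^ 2 := by
    rw [hsum_dot v]
    exact Finset.sum_congr rfl fun j hj => by ring
  have hpos : (0 : ℝ) ≤ (v - w) ⬝ᵥ (v - w) :=
    Finset.sum_nonneg fun i _ => mul_self_nonneg _
  rw [sub_dotProduct, dotProduct_sub, dotProduct_sub,
    dotProduct_comm v w] at hpos
  linarith [hpos, hww, hwv]

def mgrafY (V K k : ℕ) (σ : Fin V → ℝ) : ℕ → ℝ :=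
  fun m => if m < k then mgrafNatify σ m else mgrafNatify σ (V - K + m)

section Spectral

variable {V : ℕ} (e : Fin V → Fin V → ℝ)
  (he : ∀ i j : Fin V, e i ⬝ᵥ e j = if i = j then 1 else 0)

lemma mgraf_EtE (he : ∀ i j : Fin V, e i ⬝ᵥ e j = if i = j then 1 else 0) :
    (Matrix.of e)ᵀ * Matrix.of e = 1 := by
  rw [mul_eq_one_comm]
  ext i j
  simp only [Matrix.mul_apply, Matrix.transpose_apply, Matrix.one_apply, Matrix.of_apply]
  simpa [dotProduct] using he i j

/-- Parseval's identity for an orthonormal basis. -/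
lemma mgraf_parseval (he : ∀ i j : Fin V, e i ⬝ᵥ e j = if i = j then 1 else 0)
    (v : Fin V → ℝ) :
    ∑ i : Fin V, (e i ⬝ᵥ v) ^ 2 = v ⬝ᵥ v := by
  have hEtE := mgraf_EtE e he
  have h1 : ∑ i : Fin V, (e i ⬝ᵥ v) ^ 2 = (Matrix.of e *ᵥ v) ⬝ᵥ (Matrix.of e *ᵥ v) := by
    simp only [dotProduct, Matrix.mulVec, Matrix.of_apply, sq]
  rw [h1, Matrix.dotProduct_mulVec, ← Matrix.vecMul_transpose, Matrix.vecMul_vecMul,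
    hEtE, Matrix.vecMul_one]

/-- Spectral expansion of the quadratic form. -/
lemma mgraf_spectral (B : Matrix (Fin V) (Fin V) ℝ) (σ : Fin V → ℝ)
    (he : ∀ i j : Fin V, e i ⬝ᵥ e j = if i = j then 1 else 0)
    (heig : ∀ j : Fin V, B.mulVec (e j) = σ j • e j) (v : Fin V → ℝ) :
    v ⬝ᵥ B.mulVec v = ∑ i : Fin V, σ i * (e i ⬝ᵥ v) ^ 2 := by
  have hEtE := mgraf_EtE e he
  set E := Matrix.of e with hE
  have hBE : B * Eᵀ = Eᵀ * Matrix.diagonal σ := by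
    ext i j
    rw [Matrix.mul_diagonal, Matrix.transpose_apply]
    simp only [Matrix.mul_apply, Matrix.transpose_apply, hE, Matrix.of_apply]
    have h := congrFun (heig j) i
    simp only [Matrix.mulVec, dotProduct, Pi.smul_apply, smul_eq_mul] at h
    rw [h]; ring
  have hB2 : B = Eᵀ * Matrix.diagonal σ * E := by
    calc B = B * (Eᵀ * E) := by rw [hEtE, Matrix.mul_one]
      _ = B * Eᵀ * E := by rw [Matrix.mul_assoc]
      _ = _ := by rw [hBE]
  rw [hB2, Matrix.mul_assoc, ← Matrix.mulVec_mulVec, Matrix.dotProduct_mulVec,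
    Matrix.vecMul_transpose, ← Matrix.mulVec_mulVec]
  simp only [dotProduct, Matrix.mulVec_diagonal]
  refine Finset.sum_congr rfl fun i _ => ?_
  simp only [hE, Matrix.mulVec, dotProduct, Matrix.of_apply]
  ring

end Spectral

/-- For a real symmetric `V × V` matrix `B` with eigenvalues
`σ` in decreasing order (witnessed by an orthonormal eigenbasis `e`), and reals
`λ 0 ≥ … ≥ λ (k-1) > 0 > λ k ≥ … ≥ λ (K-1)`, every orthonormal family
`u : Fin K → ℝ^V` satisfies
`∑ j, λ j * uⱼᵀ B uⱼ ≤ ∑ j < k, λ j * σ j + ∑ j ≥ k, λ j * σ (V-K+j)`,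
with equality attained at the corresponding eigenvectors. -/
theorem weighted_rayleigh_sum_mixed_signs
    (V K k : ℕ) (hKV : K ≤ V) (hkK : k ≤ K)
    (B : Matrix (Fin V) (Fin V) ℝ) (hB : B.IsSymm)
    (σ : Fin V → ℝ) (hσ : Antitone σ)
    (e : Fin V → (Fin V → ℝ))
    (he : ∀ i j : Fin V, e i ⬝ᵥ e j = if i = j then 1 else 0)
    (heig : ∀ j : Fin V, B.mulVec (e j) = σ j • e j)
    (lam : Fin K → ℝ) (hlam : Antitone lam)
    (hpos : ∀ j : Fin K, (j : ℕ) < k → 0 < lam j)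
    (hneg : ∀ j : Fin K, k ≤ (j : ℕ) → lam j < 0) :
    (∀ u : Fin K → (Fin V → ℝ),
      (∀ i j : Fin K, u i ⬝ᵥ u j = if i = j then 1 else 0) →
      ∑ j : Fin K, lam j * (u j ⬝ᵥ B.mulVec (u j)) ≤
        ∑ j : Fin K, lam j * σ (mgrafIdx V K k hKV j)) ∧
    ∑ j : Fin K, lam j *
        (e (mgrafIdx V K k hKV j) ⬝ᵥ B.mulVec (e (mgrafIdx V K k hKV j)))
      = ∑ j : Fin K, lam j * σ (mgrafIdx V K k hKV j) := by
  constructor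
  · intro u hu
    -- spectral decomposition of partial sums
    have hcore : ∀ S : Finset (Fin K),
        ∑ j ∈ S, (u j ⬝ᵥ B.mulVec (u j))
          = ∑ i : Fin V, σ i * ∑ j ∈ S, (u j ⬝ᵥ e i) ^ 2 := by
      intro S
      rw [Finset.sum_congr rfl fun j (_ : j ∈ S) => mgraf_spectral e B σ he heig (u j),
        Finset.sum_comm]
      refine Finset.sum_congr rfl fun i _ => ?_
      rw [Finset.mul_sum]
      exact Finset.sum_congr rfl fun j _ => by rw [dotProduct_comm (u j) (e i)]
    have htsum : ∀ S : Finset (Fin K),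
        ∑ i : Fin V, ∑ j ∈ S, (u j ⬝ᵥ e i) ^ 2 = ∑ j ∈ S, (1 : ℝ) := by
      intro S
      rw [Finset.sum_comm]
      refine Finset.sum_congr rfl fun j _ => ?_
      have h1 : ∑ i : Fin V, (u j ⬝ᵥ e i) ^ 2 = ∑ i : Fin V, (e i ⬝ᵥ u j) ^ 2 :=
        Finset.sum_congr rfl fun i _ => by rw [dotProduct_comm (u j) (e i)]
      rw [h1, mgraf_parseval e he (u j), hu j j, if_pos rfl]
    have ht1 : ∀ (S : Finset (Fin K)) (i : Fin V), ∑ j ∈ S, (u j ⬝ᵥ e i) ^ 2 ≤ 1 := by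
      intro S i
      have h := mgraf_bessel u hu S (e i)
      rwa [he i i, if_pos rfl] at h
    have ht0 : ∀ (S : Finset (Fin K)) (i : Fin V), 0 ≤ ∑ j ∈ S, (u j ⬝ᵥ e i) ^ 2 :=
      fun S i => Finset.sum_nonneg fun j _ => sq_nonneg _
    -- Ky Fan prefix bound
    have hprefix : ∀ M, M ≤ K →
        ∑ m ∈ Finset.range M, mgrafNatify (fun j => u j ⬝ᵥ B.mulVec (u j)) m
          ≤ ∑ m ∈ Finset.range M, mgrafNatify σ m := by
      intro M hMK
      have hMV : M ≤ V := le_trans hMK hKV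
      have hts : ∑ i : Fin V,
          (∑ j ∈ Finset.univ.filter (fun j : Fin K => (j : ℕ) < M), (u j ⬝ᵥ e i) ^ 2)
            = (M : ℝ) := by
        rw [htsum, Finset.sum_filter]
        simpa using mgraf_ones_lt K M hMK
      have main := mgraf_rearr_upper V M hMV σ
        (fun i => ∑ j ∈ Finset.univ.filter (fun j : Fin K => (j : ℕ) < M), (u j ⬝ᵥ e i) ^ 2)
        hσ (ht0 _) (ht1 _) hts
      have hL : ∑ i : Fin V, σ i *
            ∑ j ∈ Finset.univ.filter (fun j : Fin K => (j : ℕ) < M), (u j ⬝ᵥ e i) ^ 2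
          = ∑ m ∈ Finset.range M, mgrafNatify (fun j => u j ⬝ᵥ B.mulVec (u j)) m := by
        rw [← hcore, Finset.sum_filter,
          mgraf_sum_natify_ite (fun j => u j ⬝ᵥ B.mulVec (u j)) (fun m => m < M),
          mgraf_sum_ite_lt M K hMK]
      have hR : ∑ i : Fin V, (if (i : ℕ) < M then σ i else 0)
          = ∑ m ∈ Finset.range M, mgrafNatify σ m := by
        rw [mgraf_sum_natify_ite σ (fun m => m < M), mgraf_sum_ite_lt M V hMV]
      rw [← hL, ← hR]
      exact main
    -- Ky Fan suffix bound
    have hsuffix : ∀ M, M ≤ K →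
        ∑ m ∈ Finset.range M, mgrafNatify σ (V - 1 - m)
          ≤ ∑ m ∈ Finset.range M, mgrafNatify (fun j => u j ⬝ᵥ B.mulVec (u j)) (K - 1 - m) := by
      intro M hMK
      have hMV : M ≤ V := le_trans hMK hKV
      have hts : ∑ i : Fin V,
          (∑ j ∈ Finset.univ.filter (fun j : Fin K => K - M ≤ (j : ℕ)), (u j ⬝ᵥ e i) ^ 2)
            = (M : ℝ) := by
        rw [htsum, Finset.sum_filter]
        simpa using mgraf_ones_ge K M hMK
      have main := mgraf_rearr_lower V M hMV σ
        (fun i => ∑ j ∈ Finset.univ.filter (fun j : Fin K => K - M ≤ (j : ℕ)), (u j ⬝ᵥ e i) ^ 2)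
        hσ (ht0 _) (ht1 _) hts
      have hL : ∑ i : Fin V, (if V - M ≤ (i : ℕ) then σ i else 0)
          = ∑ m ∈ Finset.range M, mgrafNatify σ (V - 1 - m) := by
        rw [mgraf_sum_natify_ite σ (fun m => V - M ≤ m),
          ← mgraf_reflect M V hMV (mgrafNatify σ)]
      have hR : ∑ i : Fin V, σ i *
            ∑ j ∈ Finset.univ.filter (fun j : Fin K => K - M ≤ (j : ℕ)), (u j ⬝ᵥ e i) ^ 2
          = ∑ m ∈ Finset.range M, mgrafNatify (fun j => u j ⬝ᵥ B.mulVec (u j)) (K - 1 - m) := by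
        rw [← hcore, Finset.sum_filter,
          mgraf_sum_natify_ite (fun j => u j ⬝ᵥ B.mulVec (u j)) (fun m => K - M ≤ m),
          ← mgraf_reflect M K hMK (mgrafNatify (fun j => u j ⬝ᵥ B.mulVec (u j)))]
      rw [← hL, ← hR]
      exact main
    -- rewrite both sides as range sums
    have hgoalL : ∑ j : Fin K, lam j * (u j ⬝ᵥ B.mulVec (u j))
        = ∑ m ∈ Finset.range K,
            mgrafNatify lam m * mgrafNatify (fun j => u j ⬝ᵥ B.mulVec (u j)) m := by
      rw [mgraf_sum_natify (fun j => lam j * (u j ⬝ᵥ B.mulVec (u j)))]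
      refine Finset.sum_congr rfl fun m hm => ?_
      have h := Finset.mem_range.1 hm
      simp [mgrafNatify, h]
    have hgoalR : ∑ j : Fin K, lam j * σ (mgrafIdx V K k hKV j)
        = ∑ m ∈ Finset.range K, mgrafNatify lam m * mgrafY V K k σ m := by
      rw [mgraf_sum_natify (fun j => lam j * σ (mgrafIdx V K k hKV j))]
      refine Finset.sum_congr rfl fun m hm => ?_
      have h := Finset.mem_range.1 hm
      have hV : m < V := lt_of_lt_of_le h hKV
      by_cases hk : m < k
      · simp [mgrafNatify, mgrafY, mgrafIdx, h, hk, hV]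
      · have hVK : V - K + m < V := by omega
        simp [mgrafNatify, mgrafY, mgrafIdx, h, hk, hVK]
    rw [hgoalL, hgoalR]
    have hsplit : ∀ g : ℕ → ℝ, ∑ m ∈ Finset.range K, g m
        = ∑ m ∈ Finset.range k, g m + ∑ m ∈ Finset.range (K - k), g (k + m) := by
      intro g
      rw [← Finset.sum_range_add_sum_Ico g hkK, Finset.sum_Ico_eq_sum_range]
    rw [hsplit (fun m => mgrafNatify lam m * mgrafNatify (fun j => u j ⬝ᵥ B.mulVec (u j)) m),
      hsplit (fun m => mgrafNatify lam m * mgrafY V K k σ m)]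
    refine add_le_add ?_ ?_
    · -- positive part
      have h1 : ∀ m ∈ Finset.range k, mgrafNatify lam m * mgrafY V K k σ m
          = mgrafNatify lam m * mgrafNatify σ m := by
        intro m hm
        have h := Finset.mem_range.1 hm
        simp [mgrafY, h]
      rw [Finset.sum_congr rfl h1]
      refine mgraf_abel_le k (mgrafNatify lam)
        (mgrafNatify (fun j => u j ⬝ᵥ B.mulVec (u j))) (mgrafNatify σ) ?_ ?_ ?_
      · intro j hj
        have hjK : j < K := lt_of_lt_of_le hj hkK
        have h2 : mgrafNatify lam j = lam ⟨j, hjK⟩ := dif_pos hjK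
        rw [h2]
        exact le_of_lt (hpos ⟨j, hjK⟩ hj)
      · intro i j hij hj
        have hjK : j < K := lt_of_lt_of_le hj hkK
        have hiK : i < K := lt_of_le_of_lt hij hjK
        have h2 : mgrafNatify lam j = lam ⟨j, hjK⟩ := dif_pos hjK
        have h3 : mgrafNatify lam i = lam ⟨i, hiK⟩ := dif_pos hiK
        rw [h2, h3]
        exact hlam (Fin.le_def.2 hij)
      · exact fun M hM => hprefix M (le_trans hM hkK)
    · -- negative part
      have hrefl : ∀ g : ℕ → ℝ, ∑ m ∈ Finset.range (K - k), g (k + m)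
          = ∑ m ∈ Finset.range (K - k), g (K - 1 - m) := by
        intro g
        rw [← Finset.sum_range_reflect (fun m => g (k + m)) (K - k)]
        refine Finset.sum_congr rfl fun m hm => ?_
        have h := Finset.mem_range.1 hm
        congr 1
        omega
      rw [hrefl (fun m => mgrafNatify lam m * mgrafNatify (fun j => u j ⬝ᵥ B.mulVec (u j)) m),
        hrefl (fun m => mgrafNatify lam m * mgrafY V K k σ m)]
      have habel := mgraf_abel_le (K - k)
        (fun m => -(mgrafNatify lam (K - 1 - m)))
        (fun m => -(mgrafNatify (fun j => u j ⬝ᵥ B.mulVec (u j)) (K - 1 - m)))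
        (fun m => -(mgrafY V K k σ (K - 1 - m)))
        ?_ ?_ ?_
      · have hx : ∑ m ∈ Finset.range (K - k),
            mgrafNatify lam (K - 1 - m) * mgrafNatify (fun j => u j ⬝ᵥ B.mulVec (u j)) (K - 1 - m)
            = ∑ m ∈ Finset.range (K - k),
              (-(mgrafNatify lam (K - 1 - m)))
                * (-(mgrafNatify (fun j => u j ⬝ᵥ B.mulVec (u j)) (K - 1 - m))) :=
          Finset.sum_congr rfl fun m _ => (neg_mul_neg _ _).symm
        have hy : ∑ m ∈ Finset.range (K - k),
            mgrafNatify lam (K - 1 - m) * mgrafY V K k σ (K - 1 - m)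
            = ∑ m ∈ Finset.range (K - k),
              (-(mgrafNatify lam (K - 1 - m))) * (-(mgrafY V K k σ (K - 1 - m))) :=
          Finset.sum_congr rfl fun m _ => (neg_mul_neg _ _).symm
        rw [hx, hy]
        exact habel
      · intro m hm
        show 0 ≤ -mgrafNatify lam (K - 1 - m)
        have h1 : K - 1 - m < K := by omega
        have h2 : k ≤ K - 1 - m := by omega
        have h3 : mgrafNatify lam (K - 1 - m) = lam ⟨K - 1 - m, h1⟩ := dif_pos h1
        rw [h3]
        have := hneg ⟨K - 1 - m, h1⟩ h2
        linarith
      · intro i j hij hj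
        show -mgrafNatify lam (K - 1 - j) ≤ -mgrafNatify lam (K - 1 - i)
        have h1 : K - 1 - i < K := by omega
        have h2 : K - 1 - j < K := by omega
        have h3 : mgrafNatify lam (K - 1 - i) = lam ⟨K - 1 - i, h1⟩ := dif_pos h1
        have h4 : mgrafNatify lam (K - 1 - j) = lam ⟨K - 1 - j, h2⟩ := dif_pos h2
        rw [h3, h4]
        exact neg_le_neg (hlam (Fin.le_def.2 (show K - 1 - j ≤ K - 1 - i by omega)))
      · intro M hM
        show ∑ m ∈ Finset.range M, -(mgrafNatify (fun j => u j ⬝ᵥ B.mulVec (u j)) (K - 1 - m))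
          ≤ ∑ m ∈ Finset.range M, -(mgrafY V K k σ (K - 1 - m))
        have hy : ∑ m ∈ Finset.range M, -(mgrafY V K k σ (K - 1 - m))
            = -∑ m ∈ Finset.range M, mgrafNatify σ (V - 1 - m) := by
          rw [← Finset.sum_neg_distrib]
          refine Finset.sum_congr rfl fun m hm => ?_
          have hmM := Finset.mem_range.1 hm
          have hcond : ¬ (K - 1 - m < k) := by omega
          have harg : V - K + (K - 1 - m) = V - 1 - m := by omega
          simp [mgrafY, hcond, harg]
        have hx : ∑ m ∈ Finset.range M,
            -(mgrafNatify (fun j => u j ⬝ᵥ B.mulVec (u j)) (K - 1 - m))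
            = -∑ m ∈ Finset.range M,
                mgrafNatify (fun j => u j ⬝ᵥ B.mulVec (u j)) (K - 1 - m) := by
          rw [← Finset.sum_neg_distrib]
        rw [hx, hy]
        exact neg_le_neg (hsuffix M (by omega))
  · refine Finset.sum_congr rfl fun j _ => ?_
    set i := mgrafIdx V K k hKV j
    rw [heig i, dotProduct_smul, smul_eq_mul, he i i, if_pos rfl, mul_one]
end

section
/- Let π(x) = 1/(1 + exp(−x)) be the logistic function, fix μ ∈ ℝ and a ∈ {0,1}, and define f(x) = a(μ + x) + log(1 − π(μ + x)) and g(x) = (a − π(μ))·x. Then for all real x < y one has f(x) < f(y) if and only if g(x) < g(y); in particular f is strictly increasing if and only if g is strictly increasing, and f is strictly decreasing if and only if g is strictly decreasing. -/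
private lemma aux_both_mono (f g : ℝ → ℝ) (hf : StrictMono f) (hg : StrictMono g) :
    (∀ x y : ℝ, x < y → (f x < f y ↔ g x < g y)) ∧
    (StrictMono f ↔ StrictMono g) ∧
    (StrictAnti f ↔ StrictAnti g) := by
  refine ⟨fun x y hxy => iff_of_true (hf hxy) (hg hxy), iff_of_true hf hg,
    iff_of_false (fun h => ?_) (fun h => ?_)⟩
  · have := h (show (0:ℝ) < 1 by norm_num)
    have := hf (show (0:ℝ) < 1 by norm_num)
    linarith
  · have := h (show (0:ℝ) < 1 by norm_num)
    have := hg (show (0:ℝ) < 1 by norm_num)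
    linarith

private lemma aux_both_anti (f g : ℝ → ℝ) (hf : StrictAnti f) (hg : StrictAnti g) :
    (∀ x y : ℝ, x < y → (f x < f y ↔ g x < g y)) ∧
    (StrictMono f ↔ StrictMono g) ∧
    (StrictAnti f ↔ StrictAnti g) := by
  refine ⟨fun x y hxy => iff_of_false (not_lt.2 (hf hxy).le) (not_lt.2 (hg hxy).le),
    iff_of_false (fun h => ?_) (fun h => ?_), iff_of_true hf hg⟩
  · have := h (show (0:ℝ) < 1 by norm_num)
    have := hf (show (0:ℝ) < 1 by norm_num)
    linarith
  · have := h (show (0:ℝ) < 1 by norm_num)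
    have := hg (show (0:ℝ) < 1 by norm_num)
    linarith

private lemma key_log : ∀ t : ℝ, 1 - 1 / (1 + Real.exp (-t)) = 1 / (1 + Real.exp t) := by
  intro t
  have h1 : Real.exp (-t) * Real.exp t = 1 := by rw [← Real.exp_add]; simp
  have h2 : (0:ℝ) < 1 + Real.exp t := by positivity
  have h3 : (0:ℝ) < 1 + Real.exp (-t) := by positivity
  field_simp
  nlinarith

private lemma shift_log (t : ℝ) :
    t - Real.log (1 + Real.exp t) = -Real.log (1 + Real.exp (-t)) := by
  have h : (1:ℝ) + Real.exp (-t) = (1 + Real.exp t) / Real.exp t := by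
    rw [Real.exp_neg]; field_simp; ring
  rw [h, Real.log_div (by positivity) (Real.exp_ne_zero t), Real.log_exp]; ring

/-- With `π x = 1/(1 + exp(-x))` the logistic function,
`μ ∈ ℝ` and `a ∈ {0,1}`, set `f x = a(μ + x) + log (1 - π (μ + x))` and
`g x = (a - π μ) x`. Then for all `x < y`, `f x < f y ↔ g x < g y`; in
particular `f` is strictly increasing iff `g` is, and strictly decreasing
iff `g` is. -/
theorem loglik_monotone_iff_linear_surrogate (μ a : ℝ) (ha : a = 0 ∨ a = 1)
    (f g : ℝ → ℝ)
    (hf : f = fun x : ℝ =>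
      a * (μ + x) + Real.log (1 - 1 / (1 + Real.exp (-(μ + x)))))
    (hg : g = fun x : ℝ => (a - 1 / (1 + Real.exp (-μ))) * x) :
    (∀ x y : ℝ, x < y → (f x < f y ↔ g x < g y)) ∧
    (StrictMono f ↔ StrictMono g) ∧
    (StrictAnti f ↔ StrictAnti g) := by
  have hπpos : (0:ℝ) < 1 / (1 + Real.exp (-μ)) := by positivity
  have hπlt : 1 / (1 + Real.exp (-μ)) < 1 := by
    rw [div_lt_one (by positivity)]
    have := Real.exp_pos (-μ); linarith
  have hfeq : ∀ x : ℝ, f x = a * (μ + x) - Real.log (1 + Real.exp (μ + x)) := by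
    intro x
    rw [hf]
    simp only [key_log (μ + x)]
    rw [Real.log_div one_ne_zero (by positivity), Real.log_one]
    ring
  rcases ha with rfl | rfl
  · -- a = 0 : both strictly decreasing
    apply aux_both_anti
    · intro x y hxy
      rw [hfeq, hfeq]
      have : Real.exp (μ + x) < Real.exp (μ + y) := Real.exp_lt_exp.2 (by linarith)
      have hlog := Real.log_lt_log (by positivity) (show (1:ℝ) + Real.exp (μ + x) < 1 + Real.exp (μ + y) by linarith)
      linarith
    · intro x y hxy
      rw [hg]
      have : (0 - 1 / (1 + Real.exp (-μ))) < 0 := by linarith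
      dsimp only
      nlinarith
  · -- a = 1 : both strictly increasing
    apply aux_both_mono
    · intro x y hxy
      have e1 : f x = -Real.log (1 + Real.exp (-(μ + x))) := by
        rw [hfeq, one_mul, shift_log]
      have e2 : f y = -Real.log (1 + Real.exp (-(μ + y))) := by
        rw [hfeq, one_mul, shift_log]
      rw [e1, e2]
      have : Real.exp (-(μ + y)) < Real.exp (-(μ + x)) := Real.exp_lt_exp.2 (by linarith)
      have hlog := Real.log_lt_log (by positivity) (show (1:ℝ) + Real.exp (-(μ + y)) < 1 + Real.exp (-(μ + x)) by linarith)
      linarith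
    · intro x y hxy
      rw [hg]
      have : (0:ℝ) < 1 - 1 / (1 + Real.exp (-μ)) := by linarith
      dsimp only
      nlinarith
end
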